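/- arXiv:1602.04193 — 5 statements merged into one kernel-verified Lean document; each statement's English description precedes it below -/
import Mathlib

section
/- In the BQ-CADMM algorithm initialized with x_i^0 = 0 and α_i^0 = 0, the dual variable at each node i is bounded for all iterations k by |α_i^k| ≤ (1 + 6ρ|N_i|)L + |r_i|. -/
/-- In BQ-CADMM initialized with `x_i⁰ = 0` and `α_i⁰ = 0`, the dual variable at each
node `i` is bounded for all iterations `k` by `|α_i^k| ≤ (1 + 6ρ|N_i|)L + |r_i|`. -/
theorem stmt_8 (n : ℕ) (Δ L ρ : ℝ) (hΔ : 0 < Δ) (hρ : 0 < ρ)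
    (K : ℕ) (hK : 1 ≤ K) (hL : L = K * Δ)
    (N : Fin n → Finset (Fin n)) (r : Fin n → ℝ)
    (Q TX Qb : ℝ → ℝ)
    (hTX : ∀ x : ℝ, TX x = max (-L) (min L x))
    (hQ : ∀ x : ℝ, ∃ t : ℤ, Q x = t * Δ ∧ (t - 1/2) * Δ < x ∧ x ≤ (t + 1/2) * Δ)
    (hQb : Qb = Q ∘ TX)
    (x α : ℕ → Fin n → ℝ)
    (hx0 : ∀ i, x 0 i = 0) (hα0 : ∀ i, α 0 i = 0)
    (hxup : ∀ k i, x (k+1) i = (1 / (1 + 2 * ρ * (N i).card)) *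
      (ρ * (N i).card * Qb (x k i) + ρ * ∑ j ∈ N i, Qb (x k j) - α k i + r i))
    (hαup : ∀ k i, α (k+1) i = α k i +
      ρ * ((N i).card * Qb (x (k+1) i) - ∑ j ∈ N i, Qb (x (k+1) j))) :
    ∀ k i, |α k i| ≤ (1 + 6 * ρ * (N i).card) * L + |r i| := by
  have hL0 : 0 < L := by
    rw [hL]
    have : (1:ℝ) ≤ (K:ℝ) := by exact_mod_cast hK
    nlinarith
  -- boundedness of Qb
  have hQbbd : ∀ y, -L ≤ Qb y ∧ Qb y ≤ L := by
    intro y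
    rw [hQb]; simp only [Function.comp_apply]
    have hT1 : -L ≤ TX y := by rw [hTX]; exact le_max_left _ _
    have hT2 : TX y ≤ L := by
      rw [hTX]; exact max_le (by linarith) (min_le_left _ _)
    obtain ⟨t, hqt, hlo, hhi⟩ := hQ (TX y)
    have ht1 : (t:ℝ) ≤ (K:ℝ) := by
      have h : ((t:ℝ) - 1/2) * Δ < (K:ℝ) * Δ := by
        calc ((t:ℝ) - 1/2) * Δ < TX y := hlo
        _ ≤ L := hT2
        _ = (K:ℝ) * Δ := hL
      have h2 : (t:ℝ) - 1/2 < (K:ℝ) := (mul_lt_mul_iff_of_pos_right hΔ).mp h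
      have h4 : t < (K:ℤ) + 1 := by exact_mod_cast (by push_cast; linarith : (t:ℝ) < ((K:ℤ):ℝ) + 1)
      exact_mod_cast Int.lt_add_one_iff.mp h4
    have ht2 : -(K:ℝ) ≤ (t:ℝ) := by
      have h : -(K:ℝ) * Δ ≤ ((t:ℝ) + 1/2) * Δ := by
        calc -(K:ℝ) * Δ = -L := by rw [hL]; ring
        _ ≤ TX y := hT1
        _ ≤ ((t:ℝ) + 1/2) * Δ := hhi
      have h2 : -(K:ℝ) ≤ (t:ℝ) + 1/2 := (mul_le_mul_iff_of_pos_right hΔ).mp h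
      have h4 : -(K:ℤ) - 1 < t := by exact_mod_cast (by push_cast; linarith : (-(K:ℤ):ℝ) - 1 < (t:ℝ))
      exact_mod_cast (by omega : -(K:ℤ) ≤ t)
    rw [hqt, hL]
    constructor <;> nlinarith
  have hQabs : ∀ y, |Qb y| ≤ L := fun y => abs_le.mpr (hQbbd y)
  -- saturation
  have hQbhi : ∀ y, L ≤ y → Qb y = L := by
    intro y hy
    rw [hQb]; simp only [Function.comp_apply]
    have hTx : TX y = L := by
      rw [hTX, min_eq_left hy, max_eq_right (by linarith)]
    rw [hTx]
    obtain ⟨t, hqt, hlo, hhi⟩ := hQ L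
    have h1 : ((t:ℝ) - 1/2) * Δ < (K:ℝ) * Δ := by rw [← hL]; exact hlo
    have h2 : (K:ℝ) * Δ ≤ ((t:ℝ) + 1/2) * Δ := by rw [← hL]; exact hhi
    have h3 : (t:ℝ) - 1/2 < (K:ℝ) := (mul_lt_mul_iff_of_pos_right hΔ).mp h1
    have h4 : (K:ℝ) ≤ (t:ℝ) + 1/2 := (mul_le_mul_iff_of_pos_right hΔ).mp h2
    have h5 : t < (K:ℤ) + 1 := by exact_mod_cast (by push_cast; linarith : (t:ℝ) < ((K:ℤ):ℝ) + 1)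
    have h6 : (K:ℤ) - 1 < t := by exact_mod_cast (by push_cast; linarith : (((K:ℤ):ℝ)) - 1 < (t:ℝ))
    have ht : t = (K:ℤ) := by omega
    rw [hqt, ht, hL]; push_cast; ring
  have hQblo : ∀ y, y ≤ -L → Qb y = -L := by
    intro y hy
    rw [hQb]; simp only [Function.comp_apply]
    have hTx : TX y = -L := by
      rw [hTX, min_eq_right (by linarith), max_eq_left hy]
    rw [hTx]
    obtain ⟨t, hqt, hlo, hhi⟩ := hQ (-L)
    have h1 : ((t:ℝ) - 1/2) * Δ < -(K:ℝ) * Δ := by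
      calc ((t:ℝ) - 1/2) * Δ < -L := hlo
      _ = -(K:ℝ) * Δ := by rw [hL]; ring
    have h2 : -(K:ℝ) * Δ ≤ ((t:ℝ) + 1/2) * Δ := by
      calc -(K:ℝ) * Δ = -L := by rw [hL]; ring
      _ ≤ ((t:ℝ) + 1/2) * Δ := hhi
    have h3 : (t:ℝ) - 1/2 < -(K:ℝ) := (mul_lt_mul_iff_of_pos_right hΔ).mp h1
    have h4 : -(K:ℝ) ≤ (t:ℝ) + 1/2 := (mul_le_mul_iff_of_pos_right hΔ).mp h2
    have h5 : t < -(K:ℤ) + 1 := by exact_mod_cast (by push_cast; linarith : (t:ℝ) < (-(K:ℤ):ℝ) + 1)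
    have h6 : -(K:ℤ) - 1 < t := by exact_mod_cast (by push_cast; linarith : ((-(K:ℤ)):ℝ) - 1 < (t:ℝ))
    have ht : t = -(K:ℤ) := by omega
    rw [hqt, ht, hL]; push_cast; ring
  intro k i
  set d : ℝ := ((N i).card : ℝ) with hdd
  have hd : 0 ≤ d := Nat.cast_nonneg _
  have hden : (0:ℝ) < 1 + 2 * ρ * d := by positivity
  have hsum : ∀ m, |∑ j ∈ N i, Qb (x m j)| ≤ d * L := by
    intro m
    calc |∑ j ∈ N i, Qb (x m j)| ≤ ∑ j ∈ N i, |Qb (x m j)| :=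
          Finset.abs_sum_le_sum_abs _ _
    _ ≤ ∑ _j ∈ N i, L := Finset.sum_le_sum (fun j _ => hQabs _)
    _ = d * L := by rw [Finset.sum_const, nsmul_eq_mul]
  have hmul : ∀ y, -(ρ * d * L) ≤ ρ * d * Qb y ∧ ρ * d * Qb y ≤ ρ * d * L := by
    intro y
    obtain ⟨h1, h2⟩ := hQbbd y
    have hρd : 0 ≤ ρ * d := mul_nonneg hρ.le hd
    constructor <;> nlinarith
  have hmuls : ∀ m, -(ρ * d * L) ≤ ρ * (∑ j ∈ N i, Qb (x m j)) ∧
      ρ * (∑ j ∈ N i, Qb (x m j)) ≤ ρ * d * L := by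
    intro m
    obtain ⟨h1, h2⟩ := abs_le.mp (hsum m)
    constructor <;> nlinarith
  induction k with
  | zero =>
    rw [hα0 i, abs_zero]
    have h1 : 0 ≤ ρ * d * L := by positivity
    have h2 : 0 ≤ |r i| := abs_nonneg _
    linarith
  | succ k ih =>
    have hxk : (1 + 2 * ρ * d) * x (k+1) i =
        ρ * d * Qb (x k i) + ρ * (∑ j ∈ N i, Qb (x k j)) - α k i + r i := by
      rw [hxup k i]
      field_simp
      rw [hdd]
    have hau : α (k+1) i = α k i + ρ * d * Qb (x (k+1) i) -
        ρ * (∑ j ∈ N i, Qb (x (k+1) j)) := by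
      rw [hαup k i]; ring
    have hsub : α (k+1) i = ρ * d * Qb (x k i) + ρ * (∑ j ∈ N i, Qb (x k j)) + r i
        - (1 + 2 * ρ * d) * x (k+1) i
        + ρ * d * Qb (x (k+1) i) - ρ * (∑ j ∈ N i, Qb (x (k+1) j)) := by
      rw [hau]; linarith [hxk]
    obtain ⟨ihl, ihu⟩ := abs_le.mp ih
    obtain ⟨b1l, b1u⟩ := hmul (x k i)
    obtain ⟨b2l, b2u⟩ := hmuls k
    obtain ⟨b3l, b3u⟩ := hmul (x (k+1) i)
    obtain ⟨b4l, b4u⟩ := hmuls (k+1)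
    have hr1 : r i ≤ |r i| := le_abs_self _
    have hr2 : -|r i| ≤ r i := neg_abs_le _
    rw [abs_le]
    rcases le_total (x (k+1) i) L with hxL | hxL
    · rcases le_total (-L) (x (k+1) i) with hxmL | hxmL
      · -- middle case: |x^{k+1}| ≤ L
        have hc1 : (1 + 2 * ρ * d) * x (k+1) i ≤ (1 + 2 * ρ * d) * L :=
          mul_le_mul_of_nonneg_left hxL hden.le
        have hc2 : (1 + 2 * ρ * d) * (-L) ≤ (1 + 2 * ρ * d) * x (k+1) i :=
          mul_le_mul_of_nonneg_left hxmL hden.le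
        constructor <;> linarith
      · -- x^{k+1} ≤ -L
        have hq : Qb (x (k+1) i) = -L := hQblo _ hxmL
        have hc : (1 + 2 * ρ * d) * x (k+1) i ≤ (1 + 2 * ρ * d) * (-L) :=
          mul_le_mul_of_nonneg_left hxmL hden.le
        constructor
        · -- lower bound via hsub
          rw [hq] at hsub
          linarith
        · -- upper bound via hau and ih
          rw [hq] at hau
          linarith
    · -- L ≤ x^{k+1}
      have hq : Qb (x (k+1) i) = L := hQbhi _ hxL
      have hc : (1 + 2 * ρ * d) * L ≤ (1 + 2 * ρ * d) * x (k+1) i :=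
        mul_le_mul_of_nonneg_left hxL hden.le
      constructor
      · rw [hq] at hau
        linarith
      · rw [hq] at hsub
        linarith
end

section
/- In BQ-CADMM, if α_i^k > (1 + 4ρ|N_i|)L + |r_i| then the projection T_X(x_i^{k+1}) = −L, and if α_i^k < −(1 + 4ρ|N_i|)L − |r_i| then T_X(x_i^{k+1}) = L. -/
/-- In BQ-CADMM, if `α_i^k > (1 + 4ρ|N_i|)L + |r_i|` then the projection
`T_X(x_i^{k+1}) = −L`, and if `α_i^k < −(1 + 4ρ|N_i|)L − |r_i|` then `T_X(x_i^{k+1}) = L`. -/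
theorem stmt_9 (n : ℕ) (Δ L ρ : ℝ) (hΔ : 0 < Δ) (hρ : 0 < ρ)
    (K : ℕ) (hK : 1 ≤ K) (hL : L = K * Δ)
    (N : Fin n → Finset (Fin n)) (r : Fin n → ℝ)
    (Q TX Qb : ℝ → ℝ)
    (hTX : ∀ x : ℝ, TX x = max (-L) (min L x))
    (hQ : ∀ x : ℝ, ∃ t : ℤ, Q x = t * Δ ∧ (t - 1/2) * Δ < x ∧ x ≤ (t + 1/2) * Δ)
    (hQb : Qb = Q ∘ TX)
    (x α : ℕ → Fin n → ℝ)
    (hxup : ∀ k i, x (k+1) i = (1 / (1 + 2 * ρ * (N i).card)) *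
      (ρ * (N i).card * Qb (x k i) + ρ * ∑ j ∈ N i, Qb (x k j) - α k i + r i)) :
    ∀ k i,
      (α k i > (1 + 4 * ρ * (N i).card) * L + |r i| → TX (x (k+1) i) = -L) ∧
      (α k i < -((1 + 4 * ρ * (N i).card) * L) - |r i| → TX (x (k+1) i) = L) := by
  have hK0 : (0:ℝ) < K := by exact_mod_cast hK
  have hL0 : 0 < L := by rw [hL]; positivity
  -- bound on quantizer
  have hQbb : ∀ y : ℝ, |Qb y| ≤ L := by
    intro y
    have hz1 : -L ≤ TX y := by rw [hTX]; exact le_max_left _ _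
    have hz2 : TX y ≤ L := by
      rw [hTX]; exact max_le (by linarith) (min_le_left _ _)
    obtain ⟨t, ht1, ht2, ht3⟩ := hQ (TX y)
    have hq : Qb y = t * Δ := by rw [hQb]; simpa [Function.comp] using ht1
    rw [hq]
    have htK : (t:ℝ) ≤ K := by
      have h1 : ((t:ℝ) - 1/2) * Δ < K * Δ := by rw [← hL]; linarith
      have h2 : (t:ℝ) - 1/2 < K := (mul_lt_mul_iff_of_pos_right hΔ).mp h1
      have h3 : t < (K:ℤ) + 1 := by exact_mod_cast (by push_cast; linarith : (t:ℝ) < (K:ℤ) + 1)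
      exact_mod_cast Int.lt_add_one_iff.mp h3
    have htK' : -(K:ℝ) ≤ t := by
      have h1 : -(K * Δ) ≤ ((t:ℝ) + 1/2) * Δ := by rw [← hL]; linarith
      have h2 : -(K:ℝ) ≤ (t:ℝ) + 1/2 := by nlinarith
      have h3 : -(K:ℤ) - 1 < t := by exact_mod_cast (by push_cast; linarith : (-(K:ℤ) - 1 : ℝ) < (t:ℝ))
      have h4 : -(K:ℤ) ≤ t := by omega
      exact_mod_cast h4
    rw [abs_le, hL]
    constructor <;> nlinarith
  intro k i
  set c : ℝ := ((N i).card : ℝ) with hc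
  have hc0 : 0 ≤ c := by positivity
  have hD : 0 < 1 + 2 * ρ * c := by nlinarith
  have hsum : |∑ j ∈ N i, Qb (x k j)| ≤ c * L := by
    calc |∑ j ∈ N i, Qb (x k j)| ≤ ∑ j ∈ N i, |Qb (x k j)| := Finset.abs_sum_le_sum_abs _ _
    _ ≤ ∑ _j ∈ N i, L := Finset.sum_le_sum fun j _ => hQbb _
    _ = c * L := by rw [Finset.sum_const, nsmul_eq_mul]
  have hself := hQbb (x k i)
  rw [abs_le] at hsum hself
  have hx := hxup k i
  constructor
  · intro hα
    have hr : r i ≤ |r i| := le_abs_self _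
    have hM : ρ * c * Qb (x k i) + ρ * ∑ j ∈ N i, Qb (x k j) - α k i + r i
        < -((1 + 2 * ρ * c) * L) := by
      nlinarith [mul_le_mul_of_nonneg_left hself.2 (by positivity : (0:ℝ) ≤ ρ * c),
        mul_le_mul_of_nonneg_left hsum.2 hρ.le]
    have hxlt : x (k+1) i < -L := by
      rw [hx, one_div, inv_mul_eq_div, div_lt_iff₀ hD]
      nlinarith
    rw [hTX]
    have : min L (x (k+1) i) = x (k+1) i := min_eq_right (by linarith)
    rw [this]
    exact max_eq_left (by linarith)
  · intro hα
    have hr : -(|r i|) ≤ r i := neg_abs_le _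
    have hM : (1 + 2 * ρ * c) * L
        < ρ * c * Qb (x k i) + ρ * ∑ j ∈ N i, Qb (x k j) - α k i + r i := by
      nlinarith [mul_le_mul_of_nonneg_left hself.1 (by positivity : (0:ℝ) ≤ ρ * c),
        mul_le_mul_of_nonneg_left hsum.1 hρ.le]
    have hxgt : L < x (k+1) i := by
      rw [hx, one_div, inv_mul_eq_div, lt_div_iff₀ hD]
      nlinarith
    rw [hTX]
    have : min L (x (k+1) i) = L := min_eq_left (by linarith)
    rw [this]
    exact max_eq_right (by linarith)
end

section
/- If the BQ-CADMM state cycles with period T (so α^{k+T} = α^k), then ∑_{l=1}^T Q_b(x^{k+l}) lies in the span of the all-ones vector; equivalently, the sample average over one period (1/T)∑_{l=1}^T Q_b(x_i^{k+l}) is the same value x̄_Q^* for every node i. -/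
open Matrix

/-- If the BQ-CADMM state cycles with period `T` (so `α^{k₀+T} = α^{k₀}`), then
`∑_{l=1}^T Q_b(x^{k₀+l})` lies in the span of the all-ones vector; equivalently, the
sample average over one period `(1/T)∑_{l=1}^T Q_b(x_i^{k₀+l})` is the same value for
every node `i`. -/
theorem stmt_14 (n : ℕ) (ρ : ℝ) (hρ : 0 < ρ) (T k0 : ℕ) (hT : 2 ≤ T)
    (Lm : Matrix (Fin n) (Fin n) ℝ)
    (hker : ∀ v : Fin n → ℝ, Lm.mulVec v = 0 ↔ ∃ c : ℝ, v = fun _ => c)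
    (qb α : ℕ → Fin n → ℝ)
    (hup : ∀ k, α (k + 1) = α k + ρ • Lm.mulVec (qb (k + 1)))
    (hcyc : α (k0 + T) = α k0) :
    (∃ c : ℝ, (fun i => ∑ l ∈ Finset.range T, qb (k0 + l + 1) i) = fun _ => c) ∧
      ∃ xbarQ : ℝ, ∀ i, (1 / (T : ℝ)) * ∑ l ∈ Finset.range T, qb (k0 + l + 1) i = xbarQ := by
  have key : ∀ m : ℕ, α (k0 + m) =
      α k0 + ρ • Lm.mulVec (fun i => ∑ l ∈ Finset.range m, qb (k0 + l + 1) i) := by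
    intro m
    induction m with
    | zero =>
      have h0 : (fun _ : Fin n => (0:ℝ)) = 0 := rfl
      simp only [Finset.range_zero, Finset.sum_empty, h0, Matrix.mulVec_zero, smul_zero,
        add_zero, Nat.add_zero]
    | succ m ih =>
      have : k0 + (m + 1) = (k0 + m) + 1 := by ring
      rw [this, hup, ih]
      have hfun : (fun i => ∑ l ∈ Finset.range (m + 1), qb (k0 + l + 1) i)
          = (fun i => ∑ l ∈ Finset.range m, qb (k0 + l + 1) i) + qb (k0 + m + 1) := by
        funext i; simp [Finset.sum_range_succ]
      rw [hfun, Matrix.mulVec_add, smul_add]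
      abel
  have h0 : ρ • Lm.mulVec (fun i => ∑ l ∈ Finset.range T, qb (k0 + l + 1) i) = 0 := by
    have := key T
    rw [hcyc] at this
    have := (add_eq_left.mp this.symm)
    exact this
  have hmv : Lm.mulVec (fun i => ∑ l ∈ Finset.range T, qb (k0 + l + 1) i) = 0 := by
    have := smul_eq_zero.mp h0
    rcases this with h | h
    · exact absurd h hρ.ne'
    · exact h
  obtain ⟨c, hc⟩ := (hker _).mp hmv
  refine ⟨⟨c, hc⟩, ⟨(1 / (T : ℝ)) * c, fun i => ?_⟩⟩
  have := congrFun hc i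
  rw [this]
end

section
/- When BQ-CADMM converges, the consensus quantization value x_Q^* satisfies |x_Q^* − T_X(r̄)| ≤ (1 + 4ρ m/n)·(Δ/2), where r̄ is the data average, T_X is the projection onto [−L, L], and the bound is independent of the agents' data and the network size beyond the edge density m/n. -/
set_option maxHeartbeats 2000000 in
/-- When BQ-CADMM (on a connected graph with `n` nodes and `m` edges, parameter `ρ`,
resolution `Δ`, quantizer range `[−L, L]` with `L` a multiple of `Δ`, initialized at
zero) converges, the consensus quantization value `x_Q^*` satisfies
`|x_Q^* − T_X(r̄)| ≤ (1 + 4ρ m/n)·(Δ/2)`, where `r̄` is the data average. -/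
theorem stmt_16 (n m : ℕ) (hn : 0 < n) (G : SimpleGraph (Fin n)) [DecidableRel G.Adj]
    (hconn : G.Connected) (hm : G.edgeFinset.card = m)
    (Δ L ρ : ℝ) (hΔ : 0 < Δ) (hρ : 0 < ρ) (K : ℕ) (hK : 1 ≤ K) (hL : L = K * Δ)
    (r : Fin n → ℝ)
    (Q TX Qb : ℝ → ℝ)
    (hTX : ∀ x : ℝ, TX x = max (-L) (min L x))
    (hQ : ∀ x : ℝ, ∃ t : ℤ, Q x = t * Δ ∧ (t - 1/2) * Δ < x ∧ x ≤ (t + 1/2) * Δ)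
    (hQb : Qb = Q ∘ TX)
    (x α : ℕ → Fin n → ℝ)
    (hx0 : ∀ i, x 0 i = 0) (hα0 : ∀ i, α 0 i = 0)
    (hxup : ∀ k i, x (k+1) i = (1 / (1 + 2 * ρ * (G.neighborFinset i).card)) *
      (ρ * (G.neighborFinset i).card * Qb (x k i)
        + ρ * ∑ j ∈ G.neighborFinset i, Qb (x k j) - α k i + r i))
    (hαup : ∀ k i, α (k+1) i = α k i +
      ρ * ((G.neighborFinset i).card * Qb (x (k+1) i)
        - ∑ j ∈ G.neighborFinset i, Qb (x (k+1) j)))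
    (k0 : ℕ) (xQ : ℝ)
    (hconv : ∀ k ≥ k0, (∀ i, Qb (x k i) = xQ) ∧ x k = x k0 ∧ α k = α k0) :
    |xQ - TX ((∑ i, r i) / n)| ≤ (1 + 4 * ρ * m / n) * (Δ / 2) := by
  classical
  set d : Fin n → ℝ := fun i => ((G.neighborFinset i).card : ℝ) with hd_def
  have hn' : (0 : ℝ) < n := by exact_mod_cast hn
  have hd0 : ∀ i, (0:ℝ) ≤ d i := fun i => by positivity
  have hL0 : 0 < L := by
    rw [hL]
    have : (1:ℝ) ≤ K := by exact_mod_cast hK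
    nlinarith
  -- swapping sums over neighbors (handshake)
  have hswap : ∀ f : Fin n → ℝ,
      ∑ i, ∑ j ∈ G.neighborFinset i, f j = ∑ i, d i * f i := by
    intro f
    have h1 : ∀ i, ∑ j ∈ G.neighborFinset i, f j
        = ∑ j : Fin n, if G.Adj i j then f j else 0 := by
      intro i
      rw [SimpleGraph.neighborFinset_eq_filter, Finset.sum_filter]
    have h2 : ∀ j, ∑ i : Fin n, (if G.Adj i j then f j else 0) = d j * f j := by
      intro j
      have he : (fun i => if G.Adj i j then f j else 0)
          = fun i => if G.Adj j i then f j else 0 :=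
        funext fun i => if_congr (G.adj_comm i j) rfl rfl
      rw [he, ← Finset.sum_filter, ← SimpleGraph.neighborFinset_eq_filter,
        Finset.sum_const, nsmul_eq_mul, hd_def]
    calc ∑ i, ∑ j ∈ G.neighborFinset i, f j
        = ∑ i, ∑ j : Fin n, if G.Adj i j then f j else 0 :=
          Finset.sum_congr rfl fun i _ => h1 i
      _ = ∑ j : Fin n, ∑ i : Fin n, if G.Adj i j then f j else 0 := Finset.sum_comm
      _ = ∑ j, d j * f j := Finset.sum_congr rfl fun j _ => h2 j
  -- degree sum
  have hdsum : ∑ i, d i = 2 * m := by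
    have := G.sum_degrees_eq_twice_card_edges
    rw [hm] at this
    rw [hd_def]
    push_cast
    exact_mod_cast congrArg (fun k : ℕ => (k : ℝ)) this
  -- α sums to zero
  have hαsum : ∀ k, ∑ i, α k i = 0 := by
    intro k
    induction k with
    | zero => simp [hα0]
    | succ k ih =>
      have : ∑ i, α (k+1) i = ∑ i, α k i +
          ρ * ((∑ i, d i * Qb (x (k+1) i)) - ∑ i, ∑ j ∈ G.neighborFinset i, Qb (x (k+1) j)) := by
        rw [Finset.sum_congr rfl fun i _ => hαup k i, Finset.sum_add_distrib,
          ← Finset.mul_sum, Finset.sum_sub_distrib]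
      rw [this, hswap (fun j => Qb (x (k+1) j)), ih]
      ring
  -- convergence facts
  obtain ⟨hQeq, -, -⟩ := hconv k0 le_rfl
  obtain ⟨-, hxfix, -⟩ := hconv (k0+1) (Nat.le_succ k0)
  set X : Fin n → ℝ := fun i => x k0 i with hX_def
  -- fixed point equation
  have hfix : ∀ i, (1 + 2 * ρ * d i) * X i = 2 * ρ * d i * xQ - α k0 i + r i := by
    intro i
    have hpos : 0 < 1 + 2 * ρ * d i := by nlinarith [hd0 i]
    have h1 := hxup k0 i
    have hsum : ∑ j ∈ G.neighborFinset i, Qb (x k0 j) = d i * xQ := by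
      rw [Finset.sum_congr rfl fun j _ => hQeq j, Finset.sum_const, nsmul_eq_mul, hd_def]
    rw [hsum, hQeq i, congrFun hxfix i] at h1
    have : (1 + 2 * ρ * d i) * X i
        = (1 + 2 * ρ * d i) * ((1 / (1 + 2 * ρ * d i)) *
          (ρ * d i * xQ + ρ * (d i * xQ) - α k0 i + r i)) := by
      rw [← h1]
    rw [this]
    field_simp
    ring
  -- key sum identity
  have hkey : ∑ i, (1 + 2 * ρ * d i) * (X i - xQ) = (∑ i, r i) - n * xQ := by
    have h1 : ∑ i, (1 + 2 * ρ * d i) * X i = 2 * ρ * (2 * m) * xQ + ∑ i, r i := by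
      rw [Finset.sum_congr rfl fun i _ => hfix i]
      rw [show (fun i => 2 * ρ * d i * xQ - α k0 i + r i) = fun i =>
        (2 * ρ * xQ) * d i - α k0 i + r i from funext fun i => by ring]
      rw [Finset.sum_add_distrib, Finset.sum_sub_distrib, ← Finset.mul_sum, hdsum,
        hαsum k0]
      ring
    have h2 : ∑ i, (1 + 2 * ρ * d i) * (X i - xQ)
        = (∑ i, (1 + 2 * ρ * d i) * X i) - ((n : ℝ) * xQ + 2 * ρ * (2 * m) * xQ) := by
      rw [show (fun i => (1 + 2 * ρ * d i) * (X i - xQ)) = fun i =>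
        (1 + 2 * ρ * d i) * X i - (xQ + (2 * ρ * xQ) * d i) from funext fun i => by ring]
      rw [Finset.sum_sub_distrib, Finset.sum_add_distrib, ← Finset.mul_sum, hdsum,
        Finset.sum_const, Finset.card_univ, Fintype.card_fin, nsmul_eq_mul]
      ring
    rw [h2, h1]; ring
  -- quantizer nearness
  have hnear : ∀ i, |xQ - TX (X i)| ≤ Δ / 2 := by
    intro i
    have h := hQeq i
    rw [hQb] at h
    obtain ⟨t, ht1, ht2, ht3⟩ := hQ (TX (X i))
    simp only [Function.comp] at h
    rw [ht1] at h
    rw [← h, abs_le]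
    constructor <;> nlinarith
  -- TX bounds
  have hTXmem : ∀ y, -L ≤ TX y ∧ TX y ≤ L := by
    intro y
    rw [hTX]
    constructor
    · exact le_max_left _ _
    · exact max_le (by linarith) (min_le_left _ _)
  -- xQ ∈ [-L, L]
  have hxQmem : -L ≤ xQ ∧ xQ ≤ L := by
    set i0 : Fin n := ⟨0, hn⟩
    have h := hQeq i0
    rw [hQb] at h
    obtain ⟨t, ht1, ht2, ht3⟩ := hQ (TX (X i0))
    simp only [Function.comp] at h
    rw [ht1] at h
    obtain ⟨hy1, hy2⟩ := hTXmem (X i0)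
    have htK : t ≤ (K:ℤ) := by
      have h2 : ((t:ℝ) - 1/2) * Δ < (K:ℝ) * Δ := ht2.trans_le (hy2.trans_eq hL)
      have h1 : (t : ℝ) - 1/2 < K := lt_of_mul_lt_mul_right h2 hΔ.le
      have h3 : ((t:ℤ) : ℝ) < (((K:ℤ) + 1 : ℤ) : ℝ) := by push_cast; linarith
      exact Int.lt_add_one_iff.mp (by exact_mod_cast h3)
    have htK' : -(K:ℤ) ≤ t := by
      have h2 : (-(K:ℝ)) * Δ ≤ ((t:ℝ) + 1/2) * Δ := by
        have h4 : -L ≤ ((t:ℝ) + 1/2) * Δ := le_trans hy1 ht3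
        rw [hL] at h4
        linarith
      have h1 : -(K : ℝ) ≤ (t : ℝ) + 1/2 := le_of_mul_le_mul_right h2 hΔ
      have h3 : ((-(K:ℤ)) : ℝ) < ((t + 1 : ℤ) : ℝ) := by push_cast; linarith
      exact Int.lt_add_one_iff.mp (by exact_mod_cast h3)
    have ht1' : (-(K:ℝ)) ≤ (t:ℝ) := by exact_mod_cast htK'
    have ht2' : (t:ℝ) ≤ (K:ℝ) := by exact_mod_cast htK
    rw [← h, hL]
    constructor
    · have h5 := mul_le_mul_of_nonneg_right ht1' hΔ.le
      linarith
    · have h5 := mul_le_mul_of_nonneg_right ht2' hΔ.le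
      linarith
  obtain ⟨hxQ1, hxQ2⟩ := hxQmem
  set rbar : ℝ := (∑ i, r i) / n with hrbar_def
  have hrsum : ∑ i, r i = n * rbar := by
    rw [hrbar_def]; field_simp
  have hB0 : Δ / 2 ≤ (1 + 4 * ρ * m / n) * (Δ / 2) := by
    have : (0:ℝ) ≤ 4 * ρ * m / n := by positivity
    nlinarith
  set B : ℝ := (1 + 4 * ρ * m / n) * (Δ / 2) with hB_def
  have hBn : n * B = (n + 4 * ρ * m) * (Δ / 2) := by
    rw [hB_def]; field_simp
  rw [abs_le]
  constructor
  · -- -B ≤ xQ - TX rbar, i.e. TX rbar - xQ ≤ B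
    by_cases h : ∀ i, X i ≤ L
    ·
      have hterm : ∀ i, X i - xQ ≤ Δ / 2 := by
        intro i
        have h1 : X i ≤ TX (X i) ∨ X i ≤ -L := by
          rw [hTX]
          rcases le_total (X i) (-L) with h' | h'
          · exact Or.inr h'
          · left
            rw [min_eq_right (h i), max_eq_right h']
        have h2 := (abs_le.mp (hnear i)).1
        rcases h1 with h1 | h1
        · linarith
        · linarith
      have hsumle : (∑ i, r i) - n * xQ ≤ (n + 4 * ρ * m) * (Δ / 2) := by
        rw [← hkey]
        calc ∑ i, (1 + 2 * ρ * d i) * (X i - xQ)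
            ≤ ∑ i, (1 + 2 * ρ * d i) * (Δ / 2) := by
              apply Finset.sum_le_sum
              intro i _
              have hpos : 0 ≤ 1 + 2 * ρ * d i := by nlinarith [hd0 i]
              exact mul_le_mul_of_nonneg_left (hterm i) hpos
          _ = (n + 4 * ρ * m) * (Δ / 2) := by
              rw [← Finset.sum_mul]
              congr 1
              rw [Finset.sum_add_distrib, ← Finset.mul_sum, hdsum, Finset.sum_const,
                Finset.card_univ, Fintype.card_fin, nsmul_eq_mul]
              ring
      have hrb : rbar - xQ ≤ B := by
        have h1 : (n:ℝ) * (rbar - xQ) ≤ n * B := by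
          rw [hBn, mul_sub, ← hrsum]
          linarith [hsumle]
        exact le_of_mul_le_mul_left h1 hn'
      have : TX rbar - xQ ≤ B := by
        rcases le_total rbar (-L) with h' | h'
        · have hTr : TX rbar = -L := by
            rw [hTX, min_eq_right (by linarith), max_eq_left h']
          rw [hTr]; linarith
        · have hTr : TX rbar ≤ rbar := by
            rw [hTX, max_eq_right (le_min (by linarith) h')]
            exact min_le_right _ _
          linarith
      linarith
    · push_neg at h
      obtain ⟨i, hi⟩ := h
      have : TX (X i) = L := by
        rw [hTX, min_eq_left hi.le, max_eq_right (by linarith)]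
      have h2 := (abs_le.mp (hnear i)).1
      rw [this] at h2
      have : TX rbar ≤ L := (hTXmem rbar).2
      linarith [hB0]
  · -- xQ - TX rbar ≤ B
    by_cases h : ∀ i, -L ≤ X i
    · have hterm : ∀ i, -(Δ / 2) ≤ X i - xQ := by
        intro i
        have h1 : TX (X i) ≤ X i := by
          rw [hTX]
          exact max_le (h i) (min_le_right _ _)
        have h2 := (abs_le.mp (hnear i)).2
        linarith
      have hsumge : -((n + 4 * ρ * m) * (Δ / 2)) ≤ (∑ i, r i) - n * xQ := by
        rw [← hkey]
        calc -((n + 4 * ρ * m) * (Δ / 2))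
            = ∑ i, (1 + 2 * ρ * d i) * (-(Δ / 2)) := by
              rw [← Finset.sum_mul, Finset.sum_add_distrib, ← Finset.mul_sum, hdsum,
                Finset.sum_const, Finset.card_univ, Fintype.card_fin, nsmul_eq_mul]
              ring
          _ ≤ ∑ i, (1 + 2 * ρ * d i) * (X i - xQ) := by
              apply Finset.sum_le_sum
              intro i _
              have hpos : 0 ≤ 1 + 2 * ρ * d i := by nlinarith [hd0 i]
              exact mul_le_mul_of_nonneg_left (hterm i) hpos
      have hrb : -B ≤ rbar - xQ := by
        have h1 : (n:ℝ) * (-B) ≤ n * (rbar - xQ) := by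
          have : (n:ℝ) * (-B) = -((n + 4 * ρ * m) * (Δ / 2)) := by
            rw [show (n:ℝ) * (-B) = -(n * B) from by ring, hBn]
          rw [this, mul_sub, ← hrsum]
          linarith [hsumge]
        exact le_of_mul_le_mul_left h1 hn'
      have : xQ - B ≤ TX rbar := by
        rw [hTX]
        rcases le_total rbar L with h' | h'
        · calc xQ - B ≤ rbar := by linarith
            _ = min L rbar := (min_eq_right h').symm
            _ ≤ max (-L) (min L rbar) := le_max_right _ _
        · calc xQ - B ≤ L := by linarith
            _ = min L rbar := (min_eq_left h').symm
            _ ≤ max (-L) (min L rbar) := le_max_right _ _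
      linarith
    · push_neg at h
      obtain ⟨i, hi⟩ := h
      have hTXi : TX (X i) = -L := by
        rw [hTX, min_eq_right (by linarith), max_eq_left (by linarith)]
      have h2 := (abs_le.mp (hnear i)).2
      rw [hTXi] at h2
      have : -L ≤ TX rbar := (hTXmem rbar).1
      linarith [hB0]
end

section
/- If |r̄| − L > (1 + 4ρ m/n)·Γ_0, where Γ_0 = max{Δ/2, 4ρnL/(1 + 2ρn)}, then BQ-CADMM must converge (rather than cycle) to a consensus quantization level in Λ_X; moreover, if additionally ρ < n/(4m), then the consensus value equals sgn(r̄)·L. -/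
lemma int_mul_eq_of_abs_lt (Δ : ℝ) (hΔ : 0 < Δ) (t s : ℤ) (h : |(t : ℝ) * Δ - s * Δ| < Δ) :
    t = s := by
  have h1 : |((t - s : ℤ) : ℝ)| * Δ < Δ := by
    have he : ((t - s : ℤ) : ℝ) * Δ = (t : ℝ) * Δ - s * Δ := by push_cast; ring
    have h0 : |((t - s : ℤ) : ℝ) * Δ| < Δ := by rw [he]; exact h
    rwa [abs_mul, abs_of_pos hΔ] at h0
  have h2 : |((t - s : ℤ) : ℝ)| < 1 := by
    by_contra hc
    push_neg at hc
    nlinarith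
  have h3 : |((t - s : ℤ) : ℝ)| < 1 := h2
  rw [abs_lt] at h3
  have h4 : (-1 : ℝ) < ((t - s : ℤ) : ℝ) ∧ ((t - s : ℤ) : ℝ) < 1 := h3
  have h5 : (-1 : ℤ) < t - s := by exact_mod_cast h4.1
  have h6 : t - s < 1 := by exact_mod_cast h4.2
  omega

/-- If `|r̄| − L > (1 + 4ρ m/n)·Γ₀` with `Γ₀ = max{Δ/2, 4ρnL/(1 + 2ρn)}`, then BQ-CADMM
must converge (rather than cycle) to a consensus quantization level in `Λ_X`; moreover,
if additionally `ρ < n/(4m)`, then the consensus value equals `sgn(r̄)·L`. The Theorem-2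
dichotomy (convergence with its error bound, or cycling with its error bound) is taken
as a hypothesis. -/
theorem stmt_18 (n m : ℕ) (hn : 0 < n) (hm : 0 < m)
    (Δ L ρ : ℝ) (hΔ : 0 < Δ) (hρ : 0 < ρ) (K : ℕ) (hK : 1 ≤ K) (hL : L = K * Δ)
    (r : Fin n → ℝ) (rbar : ℝ) (hrbar : rbar = (∑ i, r i) / n)
    (TX Qb : ℝ → ℝ)
    (hTX : ∀ x : ℝ, TX x = max (-L) (min L x))
    (hQbL : ∀ x : ℝ, |Qb x| ≤ L)
    (x : ℕ → Fin n → ℝ)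
    (Γ0 : ℝ) (hΓ0 : Γ0 = max (Δ / 2) (4 * ρ * n * L / (1 + 2 * ρ * n)))
    -- Theorem 2 dichotomy:
    (hdich :
      (∃ k0 : ℕ, ∃ xQ : ℝ, (∃ t : ℤ, xQ = t * Δ) ∧ |xQ| ≤ L ∧
        (∀ k ≥ k0, ∀ i, Qb (x k i) = xQ) ∧
        |xQ - TX rbar| ≤ (1 + 4 * ρ * m / n) * (Δ / 2)) ∨
      (∃ k0 T : ℕ, 2 ≤ T ∧ (∀ k ≥ k0, ∀ i, x (k + T) i = x k i) ∧
        ∃ xbarQ : ℝ,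
          (∀ k ≥ k0, ∀ i, (∑ l ∈ Finset.range T, Qb (x (k + l + 1) i)) / T = xbarQ) ∧
          |xbarQ - rbar| ≤ (1 + 4 * ρ * m / n) * Γ0))
    (hfar : |rbar| - L > (1 + 4 * ρ * m / n) * Γ0) :
    ∃ k0 : ℕ, ∃ xQ : ℝ, (∃ t : ℤ, xQ = t * Δ) ∧ |xQ| ≤ L ∧
      (∀ k ≥ k0, ∀ i, Qb (x k i) = xQ) ∧
      |xQ - TX rbar| ≤ (1 + 4 * ρ * m / n) * (Δ / 2) ∧
      (ρ < n / (4 * m) → xQ = Real.sign rbar * L) := by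
  have hL0 : 0 < L := by
    rw [hL]; positivity
  have hn' : (0 : ℝ) < n := by exact_mod_cast hn
  have hc0 : (0 : ℝ) ≤ 4 * ρ * m / n := by positivity
  have hΓ0pos : 0 < Γ0 := by rw [hΓ0]; exact lt_max_of_lt_left (by linarith)
  have hrL : L < |rbar| := by nlinarith
  rcases hdich with ⟨k0, xQ, ⟨t, ht⟩, hle, hconv, herr⟩ | ⟨k0, T, hT, _, xbarQ, hbar, herr⟩
  · refine ⟨k0, xQ, ⟨t, ht⟩, hle, hconv, herr, ?_⟩
    intro hρ2
    have hm' : (0 : ℝ) < m := by exact_mod_cast hm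
    have hc1 : 4 * ρ * m / n < 1 := by
      rw [div_lt_one hn']
      rw [lt_div_iff₀ (by positivity)] at hρ2
      linarith
    have hbd : |xQ - TX rbar| < Δ := lt_of_le_of_lt herr (by nlinarith)
    rcases lt_abs.mp hrL with hpos | hneg
    · have hsign : Real.sign rbar = 1 := Real.sign_of_pos (by linarith)
      have hTXv : TX rbar = L := by
        rw [hTX]
        rw [min_eq_left (le_of_lt hpos), max_eq_right (by linarith)]
      have : t = (K : ℤ) := by
        apply int_mul_eq_of_abs_lt Δ hΔ
        have : ((K : ℤ) : ℝ) * Δ = L := by rw [hL]; push_cast; ring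
        rw [this, ← ht, ← hTXv]; exact hbd
      rw [hsign, one_mul, ht, this, hL]; push_cast; ring
    · have hrneg : rbar < 0 := by linarith
      have hsign : Real.sign rbar = -1 := Real.sign_of_neg hrneg
      have hTXv : TX rbar = -L := by
        rw [hTX]
        rw [min_eq_right (by linarith), max_eq_left (by linarith)]
      have : t = -(K : ℤ) := by
        apply int_mul_eq_of_abs_lt Δ hΔ
        push_cast
        rw [show -(K : ℝ) * Δ = -L by rw [hL]; ring, ← ht, ← hTXv]; exact hbd
      rw [hsign, ht, this, hL]; push_cast; ring
  · exfalso
    have i0 : Fin n := ⟨0, hn⟩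
    have hx : (∑ l ∈ Finset.range T, Qb (x (k0 + l + 1) i0)) / T = xbarQ :=
      hbar k0 le_rfl i0
    have hT' : (0 : ℝ) < T := by exact_mod_cast lt_of_lt_of_le (by norm_num) hT
    have hsum : |∑ l ∈ Finset.range T, Qb (x (k0 + l + 1) i0)| ≤ T * L := by
      calc |∑ l ∈ Finset.range T, Qb (x (k0 + l + 1) i0)|
          ≤ ∑ l ∈ Finset.range T, |Qb (x (k0 + l + 1) i0)| := Finset.abs_sum_le_sum_abs _ _
        _ ≤ ∑ _l ∈ Finset.range T, L := Finset.sum_le_sum fun l _ => hQbL _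
        _ = T * L := by rw [Finset.sum_const, Finset.card_range, nsmul_eq_mul]
    have hxb : |xbarQ| ≤ L := by
      rw [← hx, abs_div, abs_of_pos hT', div_le_iff₀ hT']
      linarith [hsum]
    have : |rbar| - L ≤ |xbarQ - rbar| := by
      have := abs_sub_abs_le_abs_sub rbar xbarQ
      rw [abs_sub_comm] at this
      linarith
    linarith
end
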